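/- arXiv:2009.10582 — 2 statements merged into one kernel-verified Lean document; each statement's English description precedes it below -/
import Mathlib

section
/- In the generic-coding construction, for every x : Set ℕ and every i : ℕ, the string c (i+1) belongs to D i and is an initial segment of x̃; consequently x̃ meets every D i (i.e., x̃ is generic for the family D). -/
open scoped Classical

/-- `s` is an initial segment of `g : ℕ → Bool`: the finite partial function given by `s`
agrees with `g` on its domain. -/
def InitSeg (s : List Bool) (g : ℕ → Bool) : Prop :=
  ∀ k, (h : k < s.length) → s.get ⟨k, h⟩ = g k

/-- A set of binary strings is dense if every string has an extension in it,
where `s` extends `t` iff `t` is a prefix of `s`. -/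
def DenseStrings (D : Set (List Bool)) : Prop :=
  ∀ t : List Bool, ∃ s ∈ D, t <+: s

/-- `s` properly extends `t`: `t` is a proper prefix of `s`. -/
def ProperExt (s t : List Bool) : Prop := t <+: s ∧ t ≠ s

/-- Two strings are incompatible if neither is a prefix of the other. -/
def Incompat (s t : List Bool) : Prop := ¬s <+: t ∧ ¬t <+: s

/-- The minimal element of a set of strings: the one of least code under the canonical
(`Encodable`) encoding of `List Bool` into `ℕ` (junk value `[]` if the set is empty). -/
noncomputable def minString (S : Set (List Bool)) : List Bool :=
  ((Encodable.decode (sInf (Encodable.encode '' S)) : Option (List Bool))).getD []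

/-- The recursively defined sequence of conditions `c i` coding `x` along the dense family `D`:
`c 0 = []`; `e i` is the minimal element of `D i` properly extending `c i`;
`c (i+1) = e i` if `i ∈ x`, and otherwise `c (i+1)` is the minimal element of `D i`
properly extending `c i` and incompatible with `e i`. -/
noncomputable def cSeq (D : ℕ → Set (List Bool)) (x : Set ℕ) : ℕ → List Bool
  | 0 => []
  | i + 1 =>
    let ci := cSeq D x i
    let ei := minString {s ∈ D i | ProperExt s ci}
    if i ∈ x then ei
    else minString {s ∈ D i | ProperExt s ci ∧ Incompat s ei}

/-- `e i`: the minimal element of `D i` properly extending `c i`. -/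
noncomputable def eSeq (D : ℕ → Set (List Bool)) (x : Set ℕ) (i : ℕ) : List Bool :=
  minString {s ∈ D i | ProperExt s (cSeq D x i)}

/-- `x̃`: the unique function having every `c i` as an initial segment (when each `D i` is
dense, `c (i+1)` properly extends `c i`, so `c (k+1)` has length `> k` and determines bit `k`). -/
noncomputable def tilde (D : ℕ → Set (List Bool)) (x : Set ℕ) : ℕ → Bool :=
  fun k => (cSeq D x (k + 1)).getD k false

/-!
Each `c (i+1)` is a minimal element of a set that density makes nonempty: an element of `D i`
extending `c i ++ [false]` properly extends `c i`, and one extending `c i` followed by the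
negated bit of `e i` at position `(c i).length` is moreover incompatible with `e i`. Hence
`c (i+1) ∈ D i`, and the `c i` form a strictly increasing prefix chain, every member of which is
an initial segment of its limit `x̃`.
-/

lemma minString_mem {S : Set (List Bool)} (hS : S.Nonempty) : minString S ∈ S := by
  obtain ⟨t, ht, htn⟩ := Nat.sInf_mem (hS.image Encodable.encode)
  rw [minString, ← htn, Encodable.encodek]
  exact ht

lemma ProperExt.length_lt {s t : List Bool} (h : ProperExt s t) : t.length < s.length :=
  h.1.length_le.lt_of_ne fun hl => h.2 (h.1.eq_of_length hl)

lemma incompat_of_getElem_ne {s t : List Bool} {n : ℕ} (hs : n < s.length) (ht : n < t.length)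
    (h : s[n] ≠ t[n]) : Incompat s t :=
  ⟨fun hp => h (hp.getElem hs), fun hp => h (hp.getElem ht).symm⟩

lemma DenseStrings.exists_properExt {D : Set (List Bool)} (hD : DenseStrings D)
    (t : List Bool) : {s ∈ D | ProperExt s t}.Nonempty := by
  obtain ⟨s, hsD, hpre⟩ := hD (t ++ [false])
  refine ⟨s, hsD, (t.prefix_append [false]).trans hpre, ?_⟩
  rintro rfl
  simpa using hpre.length_le

lemma DenseStrings.exists_properExt_incompat {D : Set (List Bool)} (hD : DenseStrings D)
    {c e : List Bool} (he : ProperExt e c) :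
    {s ∈ D | ProperExt s c ∧ Incompat s e}.Nonempty := by
  have hce : c.length < e.length := he.length_lt
  obtain ⟨s, hsD, hpre⟩ := hD (c ++ [!e[c.length]])
  have hcs : c.length < s.length := by simpa using hpre.length_le
  have hbit : s[c.length] = !e[c.length] := by
    simpa using (hpre.getElem (i := c.length) (by simp)).symm
  refine ⟨s, hsD, ⟨(c.prefix_append _).trans hpre, ?_⟩, incompat_of_getElem_ne hcs hce ?_⟩
  · rintro rfl
    exact lt_irrefl _ hcs
  · simp [hbit]

lemma initSeg_of_properExt_chain {c : ℕ → List Bool} (hc : ∀ i, ProperExt (c (i + 1)) (c i))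
    (i : ℕ) : InitSeg (c i) fun k => (c (k + 1)).getD k false := by
  have hprefix : ∀ ⦃i j⦄, i ≤ j → c i <+: c j :=
    Nat.rel_of_forall_rel_succ_of_le _ fun n => (hc n).1
  have hlen : ∀ n, n ≤ (c n).length := by
    intro n
    induction n with
    | zero => exact Nat.zero_le _
    | succ n ih => exact ih.trans_lt (hc n).length_lt
  intro k hk
  have hk' : k < (c (k + 1)).length := hlen (k + 1)
  rw [List.get_eq_getElem]
  dsimp only
  rw [List.getD_eq_getElem _ _ hk']
  rcases le_total i (k + 1) with h | h
  · exact (hprefix h).getElem hk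
  · exact ((hprefix h).getElem hk').symm

lemma cSeq_succ_mem_and_properExt {D : ℕ → Set (List Bool)} (hD : ∀ i, DenseStrings (D i))
    (x : Set ℕ) (i : ℕ) :
    cSeq D x (i + 1) ∈ D i ∧ ProperExt (cSeq D x (i + 1)) (cSeq D x i) := by
  have he := minString_mem ((hD i).exists_properExt (cSeq D x i))
  rw [cSeq]
  split_ifs
  · exact he
  · exact (minString_mem ((hD i).exists_properExt_incompat he.2)).imp_right And.left

/-- For every `x` and `i`, the condition `c (i+1)` belongs to `D i` and is an initial segment
of `x̃`; consequently `x̃` meets every `D i`, i.e. `x̃` is generic for the family `D`. -/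
theorem cSeq_succ_mem_and_initSeg (D : ℕ → Set (List Bool)) (hD : ∀ i, DenseStrings (D i))
    (x : Set ℕ) (i : ℕ) :
    cSeq D x (i + 1) ∈ D i ∧ InitSeg (cSeq D x (i + 1)) (tilde D x) ∧
      ∃ s ∈ D i, InitSeg s (tilde D x) := by
  have hmem := (cSeq_succ_mem_and_properExt hD x i).1
  have hinit : ∀ n, InitSeg (cSeq D x n) (tilde D x) :=
    initSeg_of_properExt_chain fun n => (cSeq_succ_mem_and_properExt hD x n).2
  exact ⟨hmem, hinit (i + 1), _, hmem, hinit (i + 1)⟩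
end

section
/- Let α be an ordinal, let f : ℕ → Set.Iio α be a bijection from ℕ onto the set of ordinals below α, and let c = {m : ℕ | ∃ i j, m = Nat.pair i j ∧ f i < f j}. Then for every i : ℕ and every ordinal β < α, one has f i = β if and only if there exists a function a : Set.Iic β → ℕ such that: (1) for every k in the range of a and every j : ℕ, if Nat.pair j k ∈ c then j is in the range of a; (2) for all ι, ξ ≤ β, ι < ξ if and only if Nat.pair (a ι) (a ξ) ∈ c; and (3) a β = i. -/
/-- Early decoding: if `c` codes the ordinal `α` via the bijection `f : ℕ → Set.Iio α`
(using Cantor pairing), then `f i = β` iff there is an assignment `a` of natural numbers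
to the ordinals `≤ β` such that the range of `a` is downward closed under `c`, `a` is
order-preserving into `c`, and `a β = i`. -/
theorem early_decoding (α : Ordinal) (f : ℕ → Set.Iio α) (hf : Function.Bijective f)
    (c : Set ℕ) (hc : c = {m : ℕ | ∃ i j : ℕ, m = Nat.pair i j ∧ f i < f j})
    (i : ℕ) (β : Ordinal) (hβ : β < α) :
    (f i : Ordinal) = β ↔
      ∃ a : Set.Iic β → ℕ,
        (∀ k ∈ Set.range a, ∀ j : ℕ, Nat.pair j k ∈ c → j ∈ Set.range a) ∧
        (∀ ι ξ : Set.Iic β, ι < ξ ↔ Nat.pair (a ι) (a ξ) ∈ c) ∧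
        a ⟨β, le_refl β⟩ = i := by
  have pair_mem : ∀ p q : ℕ, Nat.pair p q ∈ c ↔ (f p : Ordinal) < (f q : Ordinal) := by
    intro p q
    subst hc
    simp only [Set.mem_setOf_eq]
    constructor
    · rintro ⟨i', j', hpq, hlt⟩
      obtain ⟨h1, h2⟩ := Nat.pair_eq_pair.mp hpq.symm
      subst h1; subst h2
      exact hlt
    · intro h
      exact ⟨p, q, rfl, h⟩
  set e : ℕ ≃ Set.Iio α := Equiv.ofBijective f hf with he
  have hef : ∀ n, f n = e n := fun n => rfl
  constructor
  · intro hfi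
    refine ⟨fun ι => e.symm ⟨ι, lt_of_le_of_lt ι.2 hβ⟩, ?_, ?_, ?_⟩
    · intro k hk j hj
      obtain ⟨ι, hι⟩ := hk
      rw [pair_mem] at hj
      have hfk : (f k : Ordinal) = ι := by
        rw [← hι, hef, e.apply_symm_apply]
      have hfj : (f j : Ordinal) ≤ β := by
        have := hj.trans_eq hfk
        exact (this.le.trans ι.2)
      refine ⟨⟨f j, hfj⟩, ?_⟩
      simp only
      have : (⟨(f j : Ordinal), lt_of_le_of_lt hfj hβ⟩ : Set.Iio α) = f j := rfl
      rw [this, hef, e.symm_apply_apply]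
    · intro ι ξ
      rw [pair_mem]
      have h1 : (f (e.symm ⟨ι.1, lt_of_le_of_lt ι.2 hβ⟩) : Ordinal) = ι.1 := by
        rw [hef, e.apply_symm_apply]
      have h2 : (f (e.symm ⟨ξ.1, lt_of_le_of_lt ξ.2 hβ⟩) : Ordinal) = ξ.1 := by
        rw [hef, e.apply_symm_apply]
      rw [h1, h2]
      exact ⟨fun h => h, fun h => h⟩
    · have : (⟨β, hβ⟩ : Set.Iio α) = f i := by
        exact Subtype.ext hfi.symm
      simp only [this, hef, e.symm_apply_apply]
  · rintro ⟨a, hdc, hord, hai⟩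
    have key : ∀ ι : Ordinal, ∀ h : ι ≤ β, (f (a ⟨ι, h⟩) : Ordinal) = ι := by
      intro ι
      induction ι using Ordinal.induction with
      | h ι IH =>
        intro h
        by_contra hne
        rcases lt_or_gt_of_ne hne with hlt | hgt
        · -- f (a ι) < ι, then f (a ι) = ι' < ι, but also ι' < ι gives f(a ι') = ι' = f(a ι)
          set γ : Ordinal := (f (a ⟨ι, h⟩) : Ordinal) with hγ
          have hγβ : γ ≤ β := hlt.le.trans h
          have := IH γ hlt hγβ
          -- f (a γ) = γ = f (a ι), so a γ = a ι by injectivity, so γ = ι? No: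
          -- use order: γ < ι → pair (a γ) (a ι) ∈ c → f (a γ) < f (a ι), i.e. γ < γ
          have horder : (⟨γ, hγβ⟩ : Set.Iic β) < ⟨ι, h⟩ := hlt
          have := (hord ⟨γ, hγβ⟩ ⟨ι, h⟩).mp horder
          rw [pair_mem] at this
          rw [IH γ hlt hγβ] at this
          exact absurd this (lt_irrefl γ).elim
        · -- ι < f (a ι). pick j with f j = ι
          obtain ⟨j, hj⟩ := hf.2 ⟨ι, lt_of_le_of_lt h hβ⟩
          have hfj : (f j : Ordinal) = ι := by rw [hj]
          have hjc : Nat.pair j (a ⟨ι, h⟩) ∈ c := by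
            rw [pair_mem, hfj]; exact hgt
          obtain ⟨ι', hι'⟩ := hdc (a ⟨ι, h⟩) ⟨⟨ι, h⟩, rfl⟩ j hjc
          have hfι' : (f (a ι') : Ordinal) = ι := by rw [hι', hfj]
          rcases lt_trichotomy (ι'.1) ι with h1 | h1 | h1
          · have := IH ι'.1 h1 ι'.2
            rw [Subtype.coe_eta] at this
            rw [this] at hfι'
            exact absurd hfι' h1.ne
          · have : ι' = ⟨ι, h⟩ := Subtype.ext h1
            rw [this] at hfι'
            exact absurd hfι' hgt.ne'
          · have horder : (⟨ι, h⟩ : Set.Iic β) < ι' := h1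
            have := (hord ⟨ι, h⟩ ι').mp horder
            rw [pair_mem, hfι'] at this
            exact absurd this (not_lt.mpr hgt.le)
    have := key β (le_refl β)
    rw [hai] at this
    exact this
end
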